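/- Let N ∈ ℕ with N ≥ 2, J > 0, h = 0, ρ > 0, and ε, ε' ∈ (−ρJ/2, 0]. Then: (i) if ε ≠ 0, w₂(μ_MC^{ε,ρ;N}, μ_MC^{ε',ρ;N}; N) ≤ (2/J) · (1 / ( √(−2ε/J) · √(1 − (−2ε/(Jρ))) )) · |ε − ε'|; and (ii) if ε = 0, w₂(μ_MC^{0,ρ;N}, μ_MC^{ε',ρ;N}; N) ≤ (2/√J) · |ε'|^{1/2}. -/

import Mathlib

open MeasureTheory ProbabilityTheory Matrix

/-- The specific `p`-norm fluctuation distance `w_p(μ₁, μ₂; N)`: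
the infimum over all couplings `γ` of `μ₁` and `μ₂` of
`∫ (1/N) ∑ᵢ |xᵢ - yᵢ|^p dγ`, raised to the power `1/p`. -/
noncomputable def fluctDist (p : ℝ) (N : ℕ) (μ₁ μ₂ : Measure (Fin N → ℝ)) : ℝ :=
  sInf {c : ℝ | ∃ γ : Measure ((Fin N → ℝ) × (Fin N → ℝ)), IsProbabilityMeasure γ ∧
      γ.map Prod.fst = μ₁ ∧ γ.map Prod.snd = μ₂ ∧
      c = ∫ xy, (N : ℝ)⁻¹ * ∑ i, |xy.1 i - xy.2 i| ^ p ∂γ} ^ (1 / p)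

/-- The standard Gaussian measure on `ℝ^N`. -/
noncomputable def stdGaussian (N : ℕ) : Measure (Fin N → ℝ) :=
  Measure.pi fun _ => gaussianReal 0 1

/-- `U` is an orthogonal matrix such that the first coordinate of `U x` is
`N^{-1/2} ∑ᵢ xᵢ`. -/
def GoodRotation {N : ℕ} (hN : 0 < N) (U : Matrix (Fin N) (Fin N) ℝ) : Prop :=
  Uᵀ * U = 1 ∧ ∀ x : Fin N → ℝ, U.mulVec x ⟨0, hN⟩ = (∑ i, x i) / Real.sqrt N

/-- The auxiliary microcanonical ensemble `μ_MC^{m,ρ;N}` with magnetization density `m` and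
particle density `ρ`: the pushforward under `U⁻¹` of the product of the Dirac mass at `m √N`
in the first coordinate with the uniform probability measure on the sphere of radius
`√(N(ρ − m²))` in the remaining `N − 1` coordinates.  The uniform sphere measure is realized
as the pushforward of the standard Gaussian on the remaining coordinates under radial
normalization. -/
noncomputable def mcSpherical {N : ℕ} (hN : 0 < N) (U : Matrix (Fin N) (Fin N) ℝ)
    (m ρ : ℝ) : Measure (Fin N → ℝ) :=
  (stdGaussian N).map fun x =>
    U⁻¹.mulVec fun i =>
      if i = ⟨0, hN⟩ then m * Real.sqrt N
      else Real.sqrt (N * (ρ - m ^ 2)) * x i /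
        Real.sqrt (∑ j ∈ Finset.univ.filter (fun j => j ≠ (⟨0, hN⟩ : Fin N)), x j ^ 2)

-- The microcanonical energy ensemble `μ_MC^{ε,ρ;N}` at `h = 0`: for `ε ∈ (−ρJ/2, 0)` it is
-- the even mixture `(1/2) μ_MC^{m₊,ρ;N} + (1/2) μ_MC^{m₋,ρ;N}` with `m_± = ±√(−2ε/J)`,
-- and for `ε = 0` it is `μ_MC^{0,ρ;N}`.
open Classical in
noncomputable def mcEnergyZero {N : ℕ} (hN : 0 < N) (U : Matrix (Fin N) (Fin N) ℝ)
    (J ρ ε : ℝ) : Measure (Fin N → ℝ) :=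
  if ε = 0 then mcSpherical hN U 0 ρ
  else
    ((1 : ENNReal) / 2) • mcSpherical hN U (Real.sqrt (-2 * ε / J)) ρ +
      ((1 : ENNReal) / 2) • mcSpherical hN U (-Real.sqrt (-2 * ε / J)) ρ

-- auxiliary defs
noncomputable def innerVec {N : ℕ} (hN : 0 < N) (m ρ : ℝ) (x : Fin N → ℝ) : Fin N → ℝ :=
  fun i =>
    if i = ⟨0, hN⟩ then m * Real.sqrt N
    else Real.sqrt (N * (ρ - m ^ 2)) * x i /
      Real.sqrt (∑ j ∈ Finset.univ.filter (fun j => j ≠ (⟨0, hN⟩ : Fin N)), x j ^ 2)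

noncomputable def sphMap {N : ℕ} (hN : 0 < N) (U : Matrix (Fin N) (Fin N) ℝ) (m ρ : ℝ) :
    (Fin N → ℝ) → (Fin N → ℝ) := fun x => U⁻¹.mulVec (innerVec hN m ρ x)

lemma mcSpherical_eq {N : ℕ} (hN : 0 < N) (U : Matrix (Fin N) (Fin N) ℝ) (m ρ : ℝ) :
    mcSpherical hN U m ρ = (stdGaussian N).map (sphMap hN U m ρ) := rfl

instance gaussNoAtoms : NullSingletonClass (gaussianReal 0 1) :=
  ⟨fun x => gaussianReal_absolutelyContinuous 0 one_ne_zero (measure_singleton x)⟩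

instance stdGaussian_prob (N : ℕ) : IsProbabilityMeasure (stdGaussian N) := by
  unfold _root_.stdGaussian; infer_instance

lemma orth_sum_sq {N : ℕ} (A : Matrix (Fin N) (Fin N) ℝ) (hA : Aᵀ * A = 1) (z : Fin N → ℝ) :
    ∑ i, (A.mulVec z i) ^ 2 = ∑ i, z i ^ 2 := by
  have h : (A.mulVec z) ⬝ᵥ (A.mulVec z) = z ⬝ᵥ z := by
    rw [Matrix.dotProduct_mulVec, ← Matrix.mulVec_transpose, Matrix.mulVec_mulVec, hA,
      Matrix.one_mulVec]
  simpa [dotProduct, sq] using h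

lemma measurable_mulVec {N : ℕ} (A : Matrix (Fin N) (Fin N) ℝ) :
    Measurable (fun v : Fin N → ℝ => A.mulVec v) :=
  measurable_pi_lambda _ fun i => by
    simpa [Matrix.mulVec, dotProduct] using
      Finset.measurable_sum Finset.univ fun j _ => (by fun_prop :
        Measurable fun c : Fin N → ℝ => A i j * c j)

lemma measurable_innerVec {N : ℕ} (hN : 0 < N) (m ρ : ℝ) :
    Measurable (fun x => innerVec hN m ρ x) := by
  apply measurable_pi_lambda
  intro i
  by_cases hi : i = (⟨0, hN⟩ : Fin N)
  · simp only [innerVec, hi, if_pos rfl]; exact measurable_const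
  · simp only [innerVec, if_neg hi]
    apply Measurable.div
    · exact (measurable_pi_apply i).const_mul _
    · exact (Finset.measurable_sum _ fun j _ => (measurable_pi_apply j).pow_const 2).sqrt

lemma measurable_sphMap {N : ℕ} (hN : 0 < N) (U : Matrix (Fin N) (Fin N) ℝ) (m ρ : ℝ) :
    Measurable (sphMap hN U m ρ) :=
  (measurable_mulVec U⁻¹).comp (measurable_innerVec hN m ρ)

lemma gSum_pos {N : ℕ} (hN : 0 < N) (hN2 : 2 ≤ N) :
    ∀ᵐ x ∂(stdGaussian N),
      0 < ∑ j ∈ Finset.univ.filter (fun j => j ≠ (⟨0, hN⟩ : Fin N)), x j ^ 2 := by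
  have hj1 : ((⟨1, by omega⟩ : Fin N)) ≠ (⟨0, hN⟩ : Fin N) := by
    simp [Fin.ext_iff]
  have h0 : (stdGaussian N) {x | x (⟨1, by omega⟩ : Fin N) = 0} = 0 :=
    Measure.pi_hyperplane _ _ 0
  refine ae_iff.2 (measure_mono_null ?_ h0)
  intro x hx
  simp only [Set.mem_setOf_eq, not_lt] at hx ⊢
  have hnn : (0:ℝ) ≤ ∑ j ∈ Finset.univ.filter (fun j => j ≠ (⟨0, hN⟩ : Fin N)), x j ^ 2 :=
    Finset.sum_nonneg fun j _ => sq_nonneg _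
  have heq : ∑ j ∈ Finset.univ.filter (fun j => j ≠ (⟨0, hN⟩ : Fin N)), x j ^ 2 = 0 :=
    le_antisymm hx hnn
  have := (Finset.sum_eq_zero_iff_of_nonneg (fun j _ => sq_nonneg (x j))).1 heq
    (⟨1, by omega⟩ : Fin N) (by simp [hj1])
  exact pow_eq_zero_iff (by norm_num) |>.1 this

-- the pointwise cost computation
lemma cost_pointwise {N : ℕ} (hN : 0 < N) (U : Matrix (Fin N) (Fin N) ℝ)
    (hU : GoodRotation hN U) (ρ m m' : ℝ) (x : Fin N → ℝ)
    (hx : 0 < ∑ j ∈ Finset.univ.filter (fun j => j ≠ (⟨0, hN⟩ : Fin N)), x j ^ 2) :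
    (N : ℝ)⁻¹ * ∑ i, (sphMap hN U m ρ x i - sphMap hN U m' ρ x i) ^ 2 =
      (m - m') ^ 2 + (Real.sqrt (ρ - m ^ 2) - Real.sqrt (ρ - m' ^ 2)) ^ 2 := by
  have hUinv : U⁻¹ = Uᵀ := Matrix.inv_eq_left_inv hU.1
  have hA : (U⁻¹)ᵀ * U⁻¹ = 1 := by
    rw [hUinv, Matrix.transpose_transpose]
    exact mul_eq_one_comm.1 hU.1
  set g : ℝ := ∑ j ∈ Finset.univ.filter (fun j => j ≠ (⟨0, hN⟩ : Fin N)), x j ^ 2 with hg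
  have hsg : Real.sqrt g ^ 2 = g := Real.sq_sqrt hx.le
  set a : ℝ := Real.sqrt (N * (ρ - m ^ 2)) with haa
  set a' : ℝ := Real.sqrt (N * (ρ - m' ^ 2)) with haa'
  have e1 : ∀ i, sphMap hN U m ρ x i - sphMap hN U m' ρ x i =
      (U⁻¹).mulVec (innerVec hN m ρ x - innerVec hN m' ρ x) i := by
    intro i
    simp [sphMap, Matrix.mulVec_sub]
  have e2 : ∑ i, (sphMap hN U m ρ x i - sphMap hN U m' ρ x i) ^ 2 =
      ∑ i, ((innerVec hN m ρ x - innerVec hN m' ρ x) i) ^ 2 := by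
    simp_rw [e1]
    exact orth_sum_sq _ hA _
  rw [e2]
  rw [← Finset.add_sum_erase _ _ (Finset.mem_univ (⟨0, hN⟩ : Fin N))]
  have hterm0 : ((innerVec hN m ρ x - innerVec hN m' ρ x) (⟨0, hN⟩ : Fin N)) ^ 2 =
      N * (m - m') ^ 2 := by
    have hsN : Real.sqrt (N:ℝ) ^ 2 = N := Real.sq_sqrt (Nat.cast_nonneg N)
    simp only [Pi.sub_apply, innerVec, if_pos rfl, if_true, eq_self_iff_true]
    nlinarith [hsN]
  have hrest : ∑ i ∈ Finset.univ.erase (⟨0, hN⟩ : Fin N),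
      ((innerVec hN m ρ x - innerVec hN m' ρ x) i) ^ 2 = (a - a') ^ 2 := by
    have hstep : ∀ i ∈ Finset.univ.erase (⟨0, hN⟩ : Fin N),
        ((innerVec hN m ρ x - innerVec hN m' ρ x) i) ^ 2 = (a - a') ^ 2 / g * x i ^ 2 := by
      intro i hi
      have hine : i ≠ (⟨0, hN⟩ : Fin N) := Finset.ne_of_mem_erase hi
      simp only [Pi.sub_apply, innerVec, if_neg hine]
      rw [div_sub_div_same, ← sub_mul]
      rw [div_pow, mul_pow, hsg]
      ring
    rw [Finset.sum_congr rfl hstep, ← Finset.mul_sum]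
    have hsum : ∑ i ∈ Finset.univ.erase (⟨0, hN⟩ : Fin N), x i ^ 2 = g := by
      rw [hg, ← Finset.filter_ne']
    rw [hsum, div_mul_cancel₀ _ (ne_of_gt hx)]
  rw [hterm0, hrest]
  have ha2 : a = Real.sqrt N * Real.sqrt (ρ - m ^ 2) := Real.sqrt_mul (Nat.cast_nonneg N) _
  have ha2' : a' = Real.sqrt N * Real.sqrt (ρ - m' ^ 2) := Real.sqrt_mul (Nat.cast_nonneg N) _
  have hsN : Real.sqrt (N:ℝ) ^ 2 = N := Real.sq_sqrt (Nat.cast_nonneg N)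
  have hNne : (N:ℝ) ≠ 0 := Nat.cast_ne_zero.2 hN.ne'
  rw [ha2, ha2']
  field_simp
  nlinarith [hsN]

lemma abs_rpow_two (t : ℝ) : |t| ^ (2:ℝ) = t ^ 2 := by
  rw [show (2:ℝ) = ((2:ℕ):ℝ) by norm_num, Real.rpow_natCast, sq_abs]

lemma cost_eq_sq (N : ℕ) :
    (fun xy : (Fin N → ℝ) × (Fin N → ℝ) => (N : ℝ)⁻¹ * ∑ i, |xy.1 i - xy.2 i| ^ (2:ℝ)) =
    fun xy => (N : ℝ)⁻¹ * ∑ i, (xy.1 i - xy.2 i) ^ 2 := by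
  funext xy; simp [abs_rpow_two]

lemma measurable_cost_sq (N : ℕ) :
    Measurable (fun xy : (Fin N → ℝ) × (Fin N → ℝ) => (N : ℝ)⁻¹ * ∑ i, (xy.1 i - xy.2 i) ^ 2) := by
  apply Measurable.const_mul
  apply Finset.measurable_sum
  intro i _
  exact (((measurable_pi_apply i).comp measurable_fst).sub
    ((measurable_pi_apply i).comp measurable_snd)).pow_const 2

lemma coupling_main {N : ℕ} (hN : 0 < N) (hN2 : 2 ≤ N)
    (U : Matrix (Fin N) (Fin N) ℝ) (hU : GoodRotation hN U) (ρ m m' : ℝ) :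
    ∃ γ : Measure ((Fin N → ℝ) × (Fin N → ℝ)), IsProbabilityMeasure γ ∧
      γ.map Prod.fst = mcSpherical hN U m ρ ∧ γ.map Prod.snd = mcSpherical hN U m' ρ ∧
      Integrable (fun xy : (Fin N → ℝ) × (Fin N → ℝ) =>
        (N : ℝ)⁻¹ * ∑ i, |xy.1 i - xy.2 i| ^ (2:ℝ)) γ ∧
      ∫ xy, (N : ℝ)⁻¹ * ∑ i, |xy.1 i - xy.2 i| ^ (2:ℝ) ∂γ =
        (m - m') ^ 2 + (Real.sqrt (ρ - m ^ 2) - Real.sqrt (ρ - m' ^ 2)) ^ 2 := by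
  set C : ℝ := (m - m') ^ 2 + (Real.sqrt (ρ - m ^ 2) - Real.sqrt (ρ - m' ^ 2)) ^ 2 with hC
  set F : (Fin N → ℝ) → (Fin N → ℝ) × (Fin N → ℝ) :=
    fun x => (sphMap hN U m ρ x, sphMap hN U m' ρ x) with hF
  have hFm : Measurable F := (measurable_sphMap hN U m ρ).prodMk (measurable_sphMap hN U m' ρ)
  refine ⟨(stdGaussian N).map F, ?_, ?_, ?_, ?_, ?_⟩
  · exact Measure.isProbabilityMeasure_map hFm.aemeasurable
  · rw [Measure.map_map measurable_fst hFm, mcSpherical_eq]; rfl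
  · rw [Measure.map_map measurable_snd hFm, mcSpherical_eq]; rfl
  · rw [cost_eq_sq]
    rw [integrable_map_measure (measurable_cost_sq N).aestronglyMeasurable hFm.aemeasurable]
    apply (integrable_const C).congr
    filter_upwards [gSum_pos hN hN2] with x hx
    exact (cost_pointwise hN U hU ρ m m' x hx).symm
  · rw [cost_eq_sq]
    rw [integral_map hFm.aemeasurable (measurable_cost_sq N).aestronglyMeasurable]
    have : ∫ x, ((N:ℝ)⁻¹ * ∑ i, ((F x).1 i - (F x).2 i) ^ 2) ∂(stdGaussian N) =
        ∫ _x, C ∂(stdGaussian N) := by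
      apply integral_congr_ae
      filter_upwards [gSum_pos hN hN2] with x hx
      exact cost_pointwise hN U hU ρ m m' x hx
    rw [this, integral_const, probReal_univ]
    simp

lemma fluct_mix {N : ℕ} (hN : 0 < N) (hN2 : 2 ≤ N)
    (U : Matrix (Fin N) (Fin N) ℝ) (hU : GoodRotation hN U) (ρ m m' : ℝ) :
    fluctDist 2 N
      (((1:ENNReal)/2) • mcSpherical hN U m ρ + ((1:ENNReal)/2) • mcSpherical hN U (-m) ρ)
      (((1:ENNReal)/2) • mcSpherical hN U m' ρ + ((1:ENNReal)/2) • mcSpherical hN U (-m') ρ) ≤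
    Real.sqrt ((m - m') ^ 2 + (Real.sqrt (ρ - m ^ 2) - Real.sqrt (ρ - m' ^ 2)) ^ 2) := by
  set C : ℝ := (m - m') ^ 2 + (Real.sqrt (ρ - m ^ 2) - Real.sqrt (ρ - m' ^ 2)) ^ 2 with hC
  obtain ⟨γ₁, hp₁, hfst₁, hsnd₁, hint₁, hval₁⟩ := coupling_main hN hN2 U hU ρ m m'
  obtain ⟨γ₂, hp₂, hfst₂, hsnd₂, hint₂, hval₂⟩ := coupling_main hN hN2 U hU ρ (-m) (-m')
  have hval₂' : ∫ xy, (N : ℝ)⁻¹ * ∑ i, |xy.1 i - xy.2 i| ^ (2:ℝ) ∂γ₂ = C := by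
    rw [hval₂, hC]
    rw [show (-m - -m') = -(m - m') by ring, neg_sq, neg_sq, neg_sq]
  set γ : Measure ((Fin N → ℝ) × (Fin N → ℝ)) := ((1:ENNReal)/2) • γ₁ + ((1:ENNReal)/2) • γ₂
    with hγ
  have hhalf : ((1:ENNReal)/2) ≠ ⊤ := by norm_num
  have hpγ : IsProbabilityMeasure γ := by
    constructor
    simp [hγ, hp₁.measure_univ, hp₂.measure_univ, ENNReal.inv_two_add_inv_two]
  have hfst : γ.map Prod.fst =
      ((1:ENNReal)/2) • mcSpherical hN U m ρ + ((1:ENNReal)/2) • mcSpherical hN U (-m) ρ := by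
    rw [hγ, Measure.map_add _ _ measurable_fst, Measure.map_smul, Measure.map_smul,
      hfst₁, hfst₂]
  have hsnd : γ.map Prod.snd =
      ((1:ENNReal)/2) • mcSpherical hN U m' ρ + ((1:ENNReal)/2) • mcSpherical hN U (-m') ρ := by
    rw [hγ, Measure.map_add _ _ measurable_snd, Measure.map_smul, Measure.map_smul,
      hsnd₁, hsnd₂]
  have hint : ∫ xy, (N : ℝ)⁻¹ * ∑ i, |xy.1 i - xy.2 i| ^ (2:ℝ) ∂γ = C := by
    rw [hγ, integral_add_measure (hint₁.smul_measure hhalf) (hint₂.smul_measure hhalf),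
      integral_smul_measure, integral_smul_measure, hval₁, hval₂']
    rw [show ((1:ENNReal)/2).toReal = (1/2 : ℝ) by simp [ENNReal.toReal_div]]
    simp only [smul_eq_mul]
    rw [hC]
    ring
  -- now bound the sInf
  set S : Set ℝ := {c : ℝ | ∃ γ : Measure ((Fin N → ℝ) × (Fin N → ℝ)), IsProbabilityMeasure γ ∧
      γ.map Prod.fst = (((1:ENNReal)/2) • mcSpherical hN U m ρ +
        ((1:ENNReal)/2) • mcSpherical hN U (-m) ρ) ∧
      γ.map Prod.snd = (((1:ENNReal)/2) • mcSpherical hN U m' ρ +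
        ((1:ENNReal)/2) • mcSpherical hN U (-m') ρ) ∧
      c = ∫ xy, (N : ℝ)⁻¹ * ∑ i, |xy.1 i - xy.2 i| ^ (2:ℝ) ∂γ} with hS
  have hmem : C ∈ S := ⟨γ, hpγ, hfst, hsnd, hint.symm⟩
  have hnonneg : ∀ c ∈ S, 0 ≤ c := by
    rintro c ⟨γ', _, _, _, rfl⟩
    apply integral_nonneg
    intro xy
    positivity
  have hbdd : BddBelow S := ⟨0, hnonneg⟩
  have h1 : sInf S ≤ C := csInf_le hbdd hmem
  have h0 : 0 ≤ sInf S := le_csInf ⟨C, hmem⟩ hnonneg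
  unfold fluctDist
  rw [← hS]
  calc sInf S ^ (1/(2:ℝ)) ≤ C ^ (1/(2:ℝ)) := Real.rpow_le_rpow h0 h1 (by norm_num)
    _ = Real.sqrt C := (Real.sqrt_eq_rpow C).symm

lemma mcEnergyZero_eq {N : ℕ} (hN : 0 < N) (U : Matrix (Fin N) (Fin N) ℝ) (J ρ ε : ℝ) :
    mcEnergyZero hN U J ρ ε =
      ((1 : ENNReal) / 2) • mcSpherical hN U (Real.sqrt (-2 * ε / J)) ρ +
        ((1 : ENNReal) / 2) • mcSpherical hN U (-Real.sqrt (-2 * ε / J)) ρ := by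
  by_cases h : ε = 0
  · subst h
    rw [mcEnergyZero, if_pos rfl]
    have h0 : Real.sqrt (-2 * 0 / J) = 0 := by norm_num
    rw [h0, neg_zero, ← add_smul, ENNReal.add_halves, one_smul]
  · rw [mcEnergyZero, if_neg h]

lemma sqrt_diff_sq_le (b b' : ℝ) (hb : 0 ≤ b) (hb' : 0 ≤ b') :
    (Real.sqrt b - Real.sqrt b') ^ 2 * b ≤ (b - b') ^ 2 := by
  have h1 := Real.sq_sqrt hb
  have h2 := Real.sq_sqrt hb'
  nlinarith [Real.sqrt_nonneg b, Real.sqrt_nonneg b',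
    mul_nonneg (sq_nonneg (Real.sqrt b - Real.sqrt b'))
      (show (0:ℝ) ≤ 2 * Real.sqrt b * Real.sqrt b' + Real.sqrt b' ^ 2 by positivity)]

lemma sqrt_piece (a a' : ℝ) (ha : 0 < a) (ha' : 0 ≤ a') :
    (Real.sqrt a - Real.sqrt a') ^ 2 ≤ (a - a') ^ 2 / a := by
  rw [le_div_iff₀ ha]
  exact sqrt_diff_sq_le a a' ha.le ha'

theorem stmt14 (N : ℕ) (hN : 0 < N) (hN2 : 2 ≤ N) (J ρ : ℝ) (hJ : 0 < J) (hρ : 0 < ρ)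
    (ε ε' : ℝ) (hε : ε ∈ Set.Ioc (-(ρ * J) / 2) 0) (hε' : ε' ∈ Set.Ioc (-(ρ * J) / 2) 0)
    (U : Matrix (Fin N) (Fin N) ℝ) (hU : GoodRotation hN U) :
    -- (i) the case `ε ≠ 0`
    (ε ≠ 0 →
      fluctDist 2 N (mcEnergyZero hN U J ρ ε) (mcEnergyZero hN U J ρ ε') ≤
        (2 / J) * (1 / (Real.sqrt (-2 * ε / J) * Real.sqrt (1 - -2 * ε / (J * ρ)))) *
          |ε - ε'|) ∧
    -- (ii) the case `ε = 0`
    (ε = 0 →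
      fluctDist 2 N (mcEnergyZero hN U J ρ 0) (mcEnergyZero hN U J ρ ε') ≤
        (2 / Real.sqrt J) * Real.sqrt |ε'|) := by
  obtain ⟨hεl, hεu⟩ := hε
  obtain ⟨hε'l, hε'u⟩ := hε'
  have ha' : 0 ≤ -2 * ε' / J := by
    apply div_nonneg _ hJ.le; linarith
  have ha'ρ : -2 * ε' / J ≤ ρ := by
    rw [div_le_iff₀ hJ]; nlinarith
  constructor
  · intro hne
    have hεneg : ε < 0 := lt_of_le_of_ne hεu hne
    have ha : 0 < -2 * ε / J := by
      apply div_pos _ hJ; linarith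
    have haρ : -2 * ε / J < ρ := by
      rw [div_lt_iff₀ hJ]; nlinarith
    rw [mcEnergyZero, if_neg hne, mcEnergyZero_eq hN U J ρ ε']
    refine le_trans (fluct_mix hN hN2 U hU ρ _ _) ?_
    rw [Real.sq_sqrt ha.le, Real.sq_sqrt ha']
    set a : ℝ := -2 * ε / J with hadef
    set a' : ℝ := -2 * ε' / J with ha'def
    have ht : 1 - -2 * ε / (J * ρ) = (ρ - a) / ρ := by
      rw [hadef]; field_simp
    rw [ht]
    have hb : 0 < ρ - a := by linarith
    have hb' : 0 ≤ ρ - a' := by linarith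
    have htρ : 0 ≤ (ρ - a) / ρ := div_nonneg hb.le hρ.le
    have hR : 0 ≤ (2 / J) * (1 / (Real.sqrt a * Real.sqrt ((ρ - a) / ρ))) * |ε - ε'| := by
      positivity
    refine le_trans (Real.sqrt_le_sqrt ?_) (le_of_eq (Real.sqrt_sq hR))
    have h1sq : (Real.sqrt a * Real.sqrt ((ρ - a) / ρ)) ^ 2 = a * ((ρ - a) / ρ) := by
      rw [mul_pow, Real.sq_sqrt ha.le, Real.sq_sqrt htρ]
    have hsq : ((2 / J) * (1 / (Real.sqrt a * Real.sqrt ((ρ - a) / ρ))) * |ε - ε'|) ^ 2 =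
        (2 / J) ^ 2 * (1 / (a * ((ρ - a) / ρ))) * (ε - ε') ^ 2 := by
      rw [mul_pow, mul_pow, one_div, inv_pow, h1sq, sq_abs, ← one_div]
    rw [hsq]
    have e1 : (Real.sqrt a - Real.sqrt a') ^ 2 ≤ (a - a') ^ 2 / a := sqrt_piece a a' ha ha'
    have e2 : (Real.sqrt (ρ - a) - Real.sqrt (ρ - a')) ^ 2 ≤ (a - a') ^ 2 / (ρ - a) := by
      have := sqrt_piece (ρ - a) (ρ - a') hb hb'
      rw [show ((ρ - a) - (ρ - a')) = -(a - a') by ring, neg_sq] at this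
      exact this
    have e3 : (a - a') ^ 2 = (2 / J) ^ 2 * (ε - ε') ^ 2 := by
      rw [hadef, ha'def]; field_simp; ring
    have e4 : (a - a') ^ 2 / a + (a - a') ^ 2 / (ρ - a) =
        (2 / J) ^ 2 * (1 / (a * ((ρ - a) / ρ))) * (ε - ε') ^ 2 := by
      have h5 : (2 / J) ^ 2 * (1 / (a * ((ρ - a) / ρ))) * (ε - ε') ^ 2 =
          (a - a') ^ 2 * (1 / (a * ((ρ - a) / ρ))) := by rw [e3]; ring
      rw [h5]
      field_simp
      ring
    linarith [e1, e2]
  · intro hε0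
    rw [mcEnergyZero_eq hN U J ρ 0, mcEnergyZero_eq hN U J ρ ε']
    rw [show Real.sqrt (-2 * 0 / J) = 0 by norm_num]
    refine le_trans (fluct_mix hN hN2 U hU ρ 0 (Real.sqrt (-2 * ε' / J))) ?_
    rw [Real.sq_sqrt ha']
    rw [show ((0:ℝ) - Real.sqrt (-2 * ε' / J)) = -(Real.sqrt (-2 * ε' / J) - 0) by ring,
      neg_sq, sub_zero, Real.sq_sqrt ha']
    set a' : ℝ := -2 * ε' / J with ha'def
    have hR : 0 ≤ (2 / Real.sqrt J) * Real.sqrt |ε'| := by positivity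
    refine le_trans (Real.sqrt_le_sqrt ?_) (le_of_eq (Real.sqrt_sq hR))
    have hRsq : ((2 / Real.sqrt J) * Real.sqrt |ε'|) ^ 2 = 4 / J * |ε'| := by
      rw [mul_pow, div_pow, Real.sq_sqrt hJ.le, Real.sq_sqrt (abs_nonneg _)]
      norm_num
    rw [hRsq, abs_of_nonpos hε'u]
    have h6 : 4 / J * -ε' = 2 * a' := by rw [ha'def]; ring
    rw [h6]
    -- a' + (√ρ - √(ρ - 0^2)... goal: a' + (√(ρ - 0^2) - √(ρ - a'))^2 ≤ 2 * a'
    rw [show ρ - (0:ℝ)^2 = ρ by ring]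
    have h7 := sqrt_diff_sq_le ρ (ρ - a') hρ.le (by linarith)
    nlinarith [mul_nonneg ha' ha', ha'ρ, hρ]
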